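/- In any α-auction (0 ≤ α ≤ 1, ties to h) with valuations v_l < v_h, the maximin payoff of agent i equals c_i = v_i/2, attained by bidding c_i: bidding c_i guarantees agent i a payoff of at least c_i against every bid of the opponent, and no bid guarantees strictly more. -/
import Mathlib


/-- Payoff to the low-valuation agent in the α-auction (ties to the high-valuation agent). -/
noncomputable def UlA (vl : ℕ) (α : ℝ) (b r : ℕ) : ℝ :=
  if r < b then (vl : ℝ) - (α * b + (1 - α) * r) else α * r + (1 - α) * b

/-- Payoff to the high-valuation agent in the α-auction (ties to the high-valuation agent). -/
noncomputable def UhA (vh : ℕ) (α : ℝ) (b r : ℕ) : ℝ :=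
  if r ≤ b then (vh : ℝ) - (α * b + (1 - α) * r) else α * r + (1 - α) * b

/-- In any α-auction (`0 ≤ α ≤ 1`), each agent's maximin payoff equals `c_i = v_i / 2`,
attained by bidding `c_i`: bidding `c_i` guarantees at least `c_i` against every opponent
bid, and no bid guarantees strictly more. -/
theorem stmt17 (pbar vl vh cl ch : ℕ) (hvl : vl = 2 * cl) (hvh : vh = 2 * ch)
    (hcl : 0 < cl) (hclch : cl < ch) (hpbar : ch ≤ pbar)
    (α : ℝ) (hα0 : 0 ≤ α) (hα1 : α ≤ 1) :
    ((∀ r ≤ pbar, (cl : ℝ) ≤ UlA vl α cl r) ∧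
      (∀ b ≤ pbar, ∃ r ≤ pbar, UlA vl α b r ≤ (cl : ℝ))) ∧
    ((∀ r ≤ pbar, (ch : ℝ) ≤ UhA vh α ch r) ∧
      (∀ b ≤ pbar, ∃ r ≤ pbar, UhA vh α b r ≤ (ch : ℝ))) := by
  have hclp : cl ≤ pbar := le_of_lt (lt_of_lt_of_le hclch hpbar)
  refine ⟨⟨?_, ?_⟩, ?_, ?_⟩
  · intro r _
    unfold UlA
    split_ifs with h
    · have : (r : ℝ) ≤ (cl : ℝ) := by exact_mod_cast h.le
      rw [hvl]; push_cast; nlinarith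
    · have : (cl : ℝ) ≤ (r : ℝ) := by exact_mod_cast (not_lt.mp h)
      nlinarith
  · intro b _
    refine ⟨cl, hclp, ?_⟩
    unfold UlA
    split_ifs with h
    · have : (cl : ℝ) < (b : ℝ) := by exact_mod_cast h
      rw [hvl]; push_cast; nlinarith
    · have : (b : ℝ) ≤ (cl : ℝ) := by exact_mod_cast (not_lt.mp h)
      nlinarith
  · intro r _
    unfold UhA
    split_ifs with h
    · have : (r : ℝ) ≤ (ch : ℝ) := by exact_mod_cast h
      rw [hvh]; push_cast; nlinarith
    · have : (ch : ℝ) ≤ (r : ℝ) := by exact_mod_cast (not_le.mp h).le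
      nlinarith
  · intro b _
    refine ⟨ch, hpbar, ?_⟩
    unfold UhA
    split_ifs with h
    · have : (ch : ℝ) ≤ (b : ℝ) := by exact_mod_cast h
      rw [hvh]; push_cast; nlinarith
    · have : (b : ℝ) ≤ (ch : ℝ) := by exact_mod_cast (not_le.mp h).le
      nlinarith
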